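/- Let Φ be a Schramm sequence with Φ_k(x) = ∑_{j=1}^k φ_j(x) strictly increasing, let q ≥ 1, and let x_1 ≥ x_2 ≥ … ≥ x_n ≥ 0 satisfy ∑_{j=1}^n φ_j(x_j) ≤ V for some V > 0. Then (∑_{j=1}^n x_j^q)^{1/q} ≤ 16 · max_{1≤k≤n} k^{1/q} Φ_k^{−1}(V). -/

import Mathlib

open Finset Filter

set_option maxHeartbeats 1000000

lemma helper_geom (m : ℕ) : ∑ d ∈ Finset.range m, ((2:ℝ)⁻¹)^d ≤ 2 := by
  have h : ∀ m : ℕ, ∑ d ∈ Finset.range m, ((2:ℝ)⁻¹)^d = 2 - 2 * 2⁻¹^m := by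
    intro m
    induction m with
    | zero => simp
    | succ m ih => rw [Finset.sum_range_succ, ih, pow_succ]; ring
  rw [h]
  have : (0:ℝ) ≤ 2⁻¹ ^ m := by positivity
  linarith

lemma helper_downset (n : ℕ) (x : ℕ → ℝ) (hxm : ∀ i j, i ≤ j → j < n → x j ≤ x i) (τ : ℝ) :
    (Finset.range n).filter (fun j => τ < x j) =
      Finset.range (((Finset.range n).filter (fun j => τ < x j)).card) := by
  set S := (Finset.range n).filter (fun j => τ < x j) with hS
  have hsub : S ⊆ Finset.range S.card := by
    intro j hj
    rw [Finset.mem_range]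
    have h1 : Finset.range (j+1) ⊆ S := by
      intro i hi
      rw [Finset.mem_range, Nat.lt_succ_iff] at hi
      have hjn : j < n := by
        have := Finset.mem_filter.mp hj; exact Finset.mem_range.mp this.1
      have hτ : τ < x j := (Finset.mem_filter.mp hj).2
      rw [hS, Finset.mem_filter, Finset.mem_range]
      exact ⟨lt_of_le_of_lt hi hjn, lt_of_lt_of_le hτ (hxm i j hi hjn)⟩
    have := Finset.card_le_card h1
    simpa using this
  exact Finset.eq_of_subset_of_card_le hsub (by simp)


/-- Wu's estimate: for a Schramm sequence `Φ = {φⱼ}` with each `Φ_k = ∑_{j=1}^k φⱼ`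
strictly increasing (with `Φ_k⁻¹(V) = inv k`), `q ≥ 1`, and nonnegative nonincreasing
reals `x₁ ≥ … ≥ xₙ ≥ 0` with `∑_{j=1}^n φⱼ(xⱼ) ≤ V`,
`(∑_{j=1}^n xⱼ^q)^(1/q) ≤ 16 · max_{1≤k≤n} k^(1/q) Φ_k⁻¹(V)`. -/
theorem wu_estimate (φ : ℕ → ℝ → ℝ)
    (hmono : ∀ j, MonotoneOn (φ j) (Set.Ici 0))
    (hconv : ∀ j, ConvexOn ℝ (Set.Ici 0) (φ j))
    (hzero : ∀ j, φ j 0 = 0)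
    (hord : ∀ j, ∀ y : ℝ, 0 < y → 0 < φ (j + 1) y ∧ φ (j + 1) y ≤ φ j y)
    (hstrict : ∀ k : ℕ, 1 ≤ k →
      StrictMonoOn (fun y => ∑ j ∈ range k, φ j y) (Set.Ici 0))
    (q : ℝ) (hq : 1 ≤ q) (V : ℝ) (hV : 0 < V)
    (inv : ℕ → ℝ)
    (hinv : ∀ k : ℕ, 1 ≤ k → 0 ≤ inv k ∧ ∑ j ∈ range k, φ j (inv k) = V)
    (n : ℕ) (hn : 1 ≤ n) (x : ℕ → ℝ)
    (hx0 : ∀ j, j < n → 0 ≤ x j)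
    (hxm : ∀ i j, i ≤ j → j < n → x j ≤ x i)
    (hsum : ∑ j ∈ range n, φ j (x j) ≤ V) :
    (∑ j ∈ range n, x j ^ q) ^ (1 / q) ≤
      16 * (Finset.Icc 1 n).sup' (Finset.nonempty_Icc.mpr hn)
        (fun k => (k : ℝ) ^ (1 / q) * inv k) := by
  classical
  have hq0 : (0:ℝ) < q := lt_of_lt_of_le one_pos hq
  have hqne : q ≠ 0 := ne_of_gt hq0
  set M := (Finset.Icc 1 n).sup' (Finset.nonempty_Icc.mpr hn)
      (fun k => (k : ℝ) ^ (1 / q) * inv k) with hM_def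
  have hMle : ∀ k, 1 ≤ k → k ≤ n → (k:ℝ)^(1/q) * inv k ≤ M := by
    intro k h1 h2
    exact Finset.le_sup' (fun m : ℕ => (m:ℝ)^(1/q) * inv m) (Finset.mem_Icc.mpr ⟨h1, h2⟩)
  have hφ0 : ∀ j (y:ℝ), 0 ≤ y → 0 ≤ φ j y := by
    intro j y hy
    have := hmono j (Set.mem_Ici.mpr le_rfl) (Set.mem_Ici.mpr hy) hy
    rwa [hzero j] at this
  have hφanti : ∀ (a b : ℕ), a ≤ b → ∀ y:ℝ, 0 < y → φ b y ≤ φ a y := by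
    intro a b hab y hy
    induction b, hab using Nat.le_induction with
    | base => exact le_refl _
    | succ m hm ih => exact le_trans (hord m y hy).2 ih
  have hφpos : ∀ j (y:ℝ), 0 < y → 0 < φ j y := by
    intro j y hy
    cases j with
    | zero =>
      have := hstrict 1 le_rfl (Set.mem_Ici.mpr le_rfl) (Set.mem_Ici.mpr hy.le) hy
      simpa [Finset.sum_range_one, hzero] using this
    | succ m => exact (hord m y hy).1
  have hinv1pos : 0 < inv 1 := by
    rcases hinv 1 le_rfl with ⟨h0, hsum1⟩
    rcases h0.lt_or_eq with h | h
    · exact h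
    · exfalso
      rw [← h, Finset.sum_range_one, hzero] at hsum1
      linarith
  have hMpos : 0 < M := by
    have h1 : ((1:ℕ):ℝ)^(1/q) * inv 1 ≤ M := hMle 1 le_rfl hn
    rw [Nat.cast_one, Real.one_rpow, one_mul] at h1
    linarith
  have hMq : ∀ k, 1 ≤ k → k ≤ n → (k:ℝ) * (inv k)^q ≤ M^q := by
    intro k h1 h2
    have h3 : 0 ≤ inv k := (hinv k h1).1
    have h4 : ((k:ℝ)^(1/q) * inv k)^q ≤ M^q :=
      Real.rpow_le_rpow (by positivity) (hMle k h1 h2) hq0.le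
    rwa [Real.mul_rpow (by positivity) h3, ← Real.rpow_mul (Nat.cast_nonneg k),
      one_div_mul_cancel hqne, Real.rpow_one] at h4
  have hMq0 : (0:ℝ) ≤ M^q := Real.rpow_nonneg hMpos.le q
  -- inverse characterization
  have hT_le_inv : ∀ (k:ℕ), 1 ≤ k → k ≤ n → ∀ T:ℝ, 0 ≤ T →
      (∑ j ∈ range k, φ j T) ≤ V → T ≤ inv k := by
    intro k h1 _h2 T hT h3
    by_contra h
    push_neg at h
    have h4 := hinv k h1
    have h5 := hstrict k h1 (Set.mem_Ici.mpr h4.1) (Set.mem_Ici.mpr hT) h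
    simp only at h5
    rw [h4.2] at h5
    linarith
  -- comparison of partial sums of φ at a fixed point
  have hPhi_comp : ∀ (C k : ℕ), 1 ≤ C → C ≤ k → ∀ T:ℝ, 0 < T →
      ∑ j ∈ range k, φ j T ≤ (k:ℝ)/(C:ℝ) * ∑ j ∈ range C, φ j T := by
    intro C k hC hCk T hT
    have hC0 : (0:ℝ) < C := by exact_mod_cast hC
    have h1 : ∑ j ∈ range k, φ j T = ∑ j ∈ range C, φ j T + ∑ j ∈ Ico C k, φ j T := by
      simp only [Finset.range_eq_Ico]
      rw [← Finset.sum_Ico_consecutive _ (Nat.zero_le C) hCk]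
    have h2 : ∑ j ∈ Ico C k, φ j T ≤ ((k:ℝ) - C) * φ (C-1) T := by
      calc ∑ j ∈ Ico C k, φ j T ≤ ∑ _j ∈ Ico C k, φ (C-1) T := by
            apply Finset.sum_le_sum
            intro j hj
            exact hφanti (C-1) j (le_trans (Nat.sub_le C 1) (Finset.mem_Ico.mp hj).1) T hT
        _ = ((k - C : ℕ):ℝ) * φ (C-1) T := by
            rw [Finset.sum_const, Nat.card_Ico, nsmul_eq_mul]
        _ = ((k:ℝ) - C) * φ (C-1) T := by rw [Nat.cast_sub hCk]
    have h3 : (C:ℝ) * φ (C-1) T ≤ ∑ j ∈ range C, φ j T := by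
      calc (C:ℝ) * φ (C-1) T = ∑ _j ∈ range C, φ (C-1) T := by
            rw [Finset.sum_const, Finset.card_range, nsmul_eq_mul]
        _ ≤ ∑ j ∈ range C, φ j T := by
            apply Finset.sum_le_sum
            intro j hj
            exact hφanti j (C-1) (Nat.le_sub_one_of_lt (Finset.mem_range.mp hj)) T hT
    have hkC : (C:ℝ) ≤ k := by exact_mod_cast hCk
    have h4 : ((k:ℝ) - C) * φ (C-1) T ≤ ((k:ℝ) - C)/C * ∑ j ∈ range C, φ j T := by
      have h5 : ((k:ℝ)-C)/C * ((C:ℝ) * φ (C-1) T) = ((k:ℝ)-C) * φ (C-1) T := by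
        field_simp [hC0.ne']
      have h6 := mul_le_mul_of_nonneg_left h3 (div_nonneg (sub_nonneg.mpr hkC) hC0.le)
      linarith
    have h7 : (k:ℝ)/C * (∑ j ∈ range C, φ j T) =
        (∑ j ∈ range C, φ j T) + ((k:ℝ)-C)/C * ∑ j ∈ range C, φ j T := by
      field_simp [hC0.ne']
      ring
    rw [h1, h7]
    linarith
  -- trivial case : x 0 ≤ 0
  rcases le_or_gt (x 0) 0 with hx00 | hx00
  · have hall : ∀ j ∈ range n, x j ^ q = 0 := by
      intro j hj
      rw [Finset.mem_range] at hj
      have h1 : x j ≤ 0 := le_trans (hxm 0 j (Nat.zero_le j) hj) hx00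
      have h2 : x j = 0 := le_antisymm h1 (hx0 j hj)
      rw [h2, Real.zero_rpow hqne]
    rw [Finset.sum_congr rfl hall, Finset.sum_const_zero,
      Real.zero_rpow (one_div_ne_zero hqne)]
    linarith
  -- main case
  set t : ℕ → ℝ := fun i => x 0 * (2:ℝ)⁻¹ ^ i with ht_def
  have ht_pos : ∀ i, 0 < t i := by
    intro i
    have : (0:ℝ) < (2:ℝ)⁻¹ ^ i := by positivity
    exact mul_pos hx00 this
  have ht_succ : ∀ i, t (i+1) = t i / 2 := by
    intro i
    simp only [ht_def, pow_succ]
    ring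
  set c : ℕ → ℕ := fun i => ((range n).filter (fun j => t i < x j)).card with hc_def
  have hE : ∀ i, (range n).filter (fun j => t i < x j) = range (c i) := by
    intro i
    exact helper_downset n x hxm (t i)
  have hc_le : ∀ i, c i ≤ n := by
    intro i
    simp only [hc_def]
    exact le_trans (Finset.card_filter_le _ _) (by simp)
  have hc_mono : ∀ i, c i ≤ c (i+1) := by
    intro i
    simp only [hc_def]
    apply Finset.card_le_card
    intro j hj
    rw [Finset.mem_filter] at hj ⊢
    refine ⟨hj.1, lt_trans ?_ hj.2⟩
    rw [ht_succ]
    linarith [ht_pos i]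
  have hc0 : c 0 = 0 := by
    simp only [hc_def]
    rw [Finset.card_eq_zero, Finset.filter_eq_empty_iff]
    intro j hj
    have h1 : x j ≤ x 0 := hxm 0 j (Nat.zero_le j) (Finset.mem_range.mp hj)
    have h2 : t 0 = x 0 := by simp [ht_def]
    rw [h2]
    exact not_lt.mpr h1
  have hmem_lt : ∀ i j, j < c i → j < n ∧ t i < x j := by
    intro i j hj
    have h1 : j ∈ range (c i) := Finset.mem_range.mpr hj
    rw [← hE i, Finset.mem_filter, Finset.mem_range] at h1
    exact h1
  have hnotmem : ∀ i j, c i ≤ j → j < n → x j ≤ t i := by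
    intro i j h1 h2
    by_contra h
    push_neg at h
    have h3 : j ∈ range (c i) := by
      rw [← hE i, Finset.mem_filter]
      exact ⟨Finset.mem_range.mpr h2, h⟩
    rw [Finset.mem_range] at h3
    omega
  set w : ℕ → ℝ := fun i => ∑ j ∈ range (c i), φ j (t i) with hw_def
  have hw_nonneg : ∀ i, 0 ≤ w i := by
    intro i
    exact Finset.sum_nonneg fun j _ => hφ0 j _ (ht_pos i).le
  have hw_le_V : ∀ i, w i ≤ V := by
    intro i
    calc w i ≤ ∑ j ∈ range (c i), φ j (x j) := by
          apply Finset.sum_le_sum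
          intro j hj
          have h1 := hmem_lt i j (Finset.mem_range.mp hj)
          exact hmono j (Set.mem_Ici.mpr (ht_pos i).le) (Set.mem_Ici.mpr (hx0 j h1.1)) h1.2.le
      _ ≤ ∑ j ∈ range n, φ j (x j) := by
          apply Finset.sum_le_sum_of_subset_of_nonneg (Finset.range_subset_range.mpr (hc_le i))
          intro j hj _
          exact hφ0 j _ (hx0 j (Finset.mem_range.mp hj))
      _ ≤ V := hsum
  have hw_half : ∀ i, ∑ j ∈ range (c i), φ j (t (i+1)) ≤ w i / 2 := by
    intro i
    rw [ht_succ i]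
    simp only [hw_def]
    rw [Finset.sum_div]
    apply Finset.sum_le_sum
    intro j _
    have hcv := (hconv j).2 (Set.mem_Ici.mpr (le_refl (0:ℝ)))
      (Set.mem_Ici.mpr (ht_pos i).le)
      (by norm_num : (0:ℝ) ≤ (1:ℝ)/2) (by norm_num : (0:ℝ) ≤ (1:ℝ)/2) (by norm_num)
    simp only [smul_eq_mul, hzero, mul_zero, zero_add] at hcv
    have : (1:ℝ)/2 * t i = t i / 2 := by ring
    rw [this] at hcv
    linarith
  -- choice of I
  have h0S : (0:ℕ) ∈ (range n).filter (fun j => 0 < x j) :=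
    Finset.mem_filter.mpr ⟨Finset.mem_range.mpr hn, hx00⟩
  set ε := ((range n).filter (fun j => 0 < x j)).inf' ⟨0, h0S⟩ x with hε_def
  have hε_pos : 0 < ε := by
    obtain ⟨j, hj, hje⟩ := Finset.exists_mem_eq_inf' ⟨0, h0S⟩ x
    rw [hε_def, hje]
    exact (Finset.mem_filter.mp hj).2
  have hε_le : ∀ j, j < n → 0 < x j → ε ≤ x j := by
    intro j h1 h2
    exact Finset.inf'_le x (Finset.mem_filter.mpr ⟨Finset.mem_range.mpr h1, h2⟩)
  obtain ⟨I, hI0⟩ : ∃ N:ℕ, (2:ℝ)⁻¹ ^ N < ε / x 0 :=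
    exists_pow_lt_of_lt_one (by positivity) (by norm_num)
  have hI : ∀ j, j < n → 0 < x j → t (I+1) < x j := by
    intro j h1 h2
    have h3 : t (I+1) < ε := by
      have h4 : (2:ℝ)⁻¹ ^ (I+1) ≤ (2:ℝ)⁻¹ ^ I :=
        pow_le_pow_of_le_one (by norm_num) (by norm_num) (Nat.le_succ I)
      calc t (I+1) = x 0 * (2:ℝ)⁻¹ ^ (I+1) := rfl
        _ ≤ x 0 * (2:ℝ)⁻¹ ^ I := mul_le_mul_of_nonneg_left h4 hx00.le
        _ < x 0 * (ε / x 0) := mul_lt_mul_of_pos_left hI0 hx00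
        _ = ε := by field_simp
    exact lt_of_lt_of_le h3 (hε_le j h1 h2)
  -- block decomposition
  have hblock : ∀ (f : ℕ → ℝ) (m : ℕ),
      ∑ i ∈ range m, ∑ j ∈ Ico (c i) (c (i+1)), f j = ∑ j ∈ range (c m), f j := by
    intro f m
    induction m with
    | zero => simp [hc0]
    | succ m ih =>
      rw [Finset.sum_range_succ, ih]
      simp only [Finset.range_eq_Ico]
      exact Finset.sum_Ico_consecutive f (Nat.zero_le _) (hc_mono m)
  -- telescoping
  have hblocklow : ∀ i, w (i+1) - w i / 2 ≤ ∑ j ∈ Ico (c i) (c (i+1)), φ j (x j) := by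
    intro i
    have h1 : ∑ j ∈ Ico (c i) (c (i+1)), φ j (t (i+1)) ≤
        ∑ j ∈ Ico (c i) (c (i+1)), φ j (x j) := by
      apply Finset.sum_le_sum
      intro j hj
      rw [Finset.mem_Ico] at hj
      have h2 := hmem_lt (i+1) j hj.2
      exact hmono j (Set.mem_Ici.mpr (ht_pos (i+1)).le) (Set.mem_Ici.mpr (hx0 j h2.1)) h2.2.le
    have h3 : ∑ j ∈ Ico (c i) (c (i+1)), φ j (t (i+1)) =
        w (i+1) - ∑ j ∈ range (c i), φ j (t (i+1)) := by
      rw [Finset.sum_Ico_eq_sub _ (hc_mono i)]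
    have h4 := hw_half i
    linarith
  have hsum_w : ∑ i ∈ range (I+1), w (i+1) ≤ 2 * V := by
    have h1 : ∑ i ∈ range (I+1), (w (i+1) - w i / 2) ≤ V := by
      calc ∑ i ∈ range (I+1), (w (i+1) - w i/2)
          ≤ ∑ i ∈ range (I+1), ∑ j ∈ Ico (c i) (c (i+1)), φ j (x j) :=
            Finset.sum_le_sum fun i _ => hblocklow i
        _ = ∑ j ∈ range (c (I+1)), φ j (x j) := hblock _ _
        _ ≤ ∑ j ∈ range n, φ j (x j) := by
            apply Finset.sum_le_sum_of_subset_of_nonneg (Finset.range_subset_range.mpr (hc_le _))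
            intro j hj _
            exact hφ0 j _ (hx0 j (Finset.mem_range.mp hj))
        _ ≤ V := hsum
    have hw0 : w 0 = 0 := by simp [hw_def, hc0]
    have h2 : ∑ i ∈ range (I+1), w i ≤ ∑ i ∈ range (I+1), w (i+1) := by
      rw [Finset.sum_range_succ' (fun i => w i) I, Finset.sum_range_succ (fun i => w (i+1)) I]
      simp only [hw0, add_zero]
      exact le_add_of_nonneg_right (hw_nonneg (I+1))
    have h3 : ∑ i ∈ range (I+1), (w (i+1) - w i / 2) =
        ∑ i ∈ range (I+1), w (i+1) - (∑ i ∈ range (I+1), w i)/2 := by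
      rw [Finset.sum_sub_distrib, Finset.sum_div]
    linarith
  -- per-level bounds
  have hlevel : ∀ i,
      (Nat.floor ((c (i+1) : ℝ) * V / w (i+1)) ≤ n →
        (c (i+1):ℝ) * t (i+1) ^ q ≤ 2 * M^q * (w (i+1) / V)) ∧
      (¬ Nat.floor ((c (i+1) : ℝ) * V / w (i+1)) ≤ n → t (i+1) ≤ inv n) := by
    intro i
    by_cases hC : c (i+1) = 0
    · constructor
      · intro _
        have hw0 : w (i+1) = 0 := by simp [hw_def, hC]
        rw [hC, hw0]
        simp
      · intro hP
        exfalso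
        apply hP
        have hw0 : w (i+1) = 0 := by simp [hw_def, hC]
        rw [hw0, div_zero]
        simp
    · have hC1 : 1 ≤ c (i+1) := Nat.one_le_iff_ne_zero.mpr hC
      have hT0 : 0 < t (i+1) := ht_pos (i+1)
      have hW_pos : 0 < w (i+1) := by
        apply Finset.sum_pos' (fun j _ => hφ0 j _ hT0.le)
        exact ⟨0, Finset.mem_range.mpr hC1, hφpos 0 _ hT0⟩
      have hWV : w (i+1) ≤ V := hw_le_V (i+1)
      have hCn : c (i+1) ≤ n := hc_le (i+1)
      have hCpos : (0:ℝ) < (c (i+1):ℝ) := by exact_mod_cast hC1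
      have hCfloor : c (i+1) ≤ Nat.floor ((c (i+1):ℝ)*V/w (i+1)) := by
        apply Nat.le_floor
        rw [le_div_iff₀ hW_pos]
        nlinarith
      have hkey : ∀ k:ℕ, c (i+1) ≤ k → k ≤ n → (k:ℝ) * w (i+1) ≤ (c (i+1):ℝ)*V →
          t (i+1) ≤ inv k := by
        intro k hk1 hk2 hk3
        apply hT_le_inv k (le_trans hC1 hk1) hk2 _ hT0.le
        calc ∑ j ∈ range k, φ j (t (i+1))
            ≤ (k:ℝ)/(c (i+1):ℝ) * ∑ j ∈ range (c (i+1)), φ j (t (i+1)) :=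
              hPhi_comp (c (i+1)) k hC1 hk1 _ hT0
          _ ≤ V := by
              rw [div_mul_eq_mul_div, div_le_iff₀ hCpos]
              have hwid : ∑ j ∈ range (c (i+1)), φ j (t (i+1)) = w (i+1) := rfl
              rw [hwid]
              nlinarith
      constructor
      · intro hP
        set k := Nat.floor ((c (i+1):ℝ)*V/w (i+1)) with hk_def
        have hk1 : 1 ≤ k := le_trans hC1 hCfloor
        have hkpos : (0:ℝ) < (k:ℝ) := by exact_mod_cast hk1
        have hfl : (k:ℝ) ≤ (c (i+1):ℝ)*V/w (i+1) := Nat.floor_le (div_nonneg (mul_nonneg (Nat.cast_nonneg _) hV.le) hW_pos.le)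
        have hTk : t (i+1) ≤ inv k := by
          apply hkey k hCfloor hP
          calc (k:ℝ) * w (i+1) ≤ ((c (i+1):ℝ)*V/w (i+1)) * w (i+1) :=
                mul_le_mul_of_nonneg_right hfl hW_pos.le
            _ = (c (i+1):ℝ)*V := by field_simp
        have h2k : (c (i+1):ℝ)*V ≤ 2*(k:ℝ)*w (i+1) := by
          have hlt := Nat.lt_floor_add_one ((c (i+1):ℝ)*V/w (i+1))
          rw [← hk_def] at hlt
          have hk1' : (1:ℝ) ≤ (k:ℝ) := by exact_mod_cast hk1
          have h5 : (c (i+1):ℝ)*V/w (i+1) < 2*(k:ℝ) := by linarith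
          calc (c (i+1):ℝ)*V = ((c (i+1):ℝ)*V/w (i+1))*w (i+1) := by field_simp
            _ ≤ 2*(k:ℝ)*w (i+1) := by nlinarith
        have hxq : t (i+1)^q ≤ M^q/(k:ℝ) := by
          have h5 : t (i+1)^q ≤ (inv k)^q := Real.rpow_le_rpow hT0.le hTk hq0.le
          have h6 := hMq k hk1 hP
          rw [le_div_iff₀ hkpos]
          nlinarith [Real.rpow_nonneg ((hinv k hk1).1) q]
        calc (c (i+1):ℝ)*t (i+1)^q ≤ (c (i+1):ℝ)*(M^q/(k:ℝ)) :=
              mul_le_mul_of_nonneg_left hxq (Nat.cast_nonneg _)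
          _ = ((c (i+1):ℝ)/(k:ℝ))*M^q := by ring
          _ ≤ (2*w (i+1)/V)*M^q := by
              apply mul_le_mul_of_nonneg_right _ hMq0
              rw [div_le_div_iff₀ hkpos hV]
              nlinarith
          _ = 2*M^q*(w (i+1)/V) := by ring
      · intro hP
        push_neg at hP
        apply hkey n hCn le_rfl
        have h8 : ((n:ℕ):ℝ) ≤ (c (i+1):ℝ)*V/w (i+1) :=
          le_trans (Nat.cast_le.mpr hP.le) (Nat.floor_le (div_nonneg (mul_nonneg (Nat.cast_nonneg _) hV.le) hW_pos.le))
        calc (n:ℝ) * w (i+1) ≤ ((c (i+1):ℝ)*V/w (i+1))*w (i+1) :=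
              mul_le_mul_of_nonneg_right h8 hW_pos.le
          _ = (c (i+1):ℝ)*V := by field_simp
  -- per-level x-sum bound
  have hper : ∀ i, ∑ j ∈ Ico (c i) (c (i+1)), x j ^ q ≤
      (2:ℝ)^q * ((c (i+1):ℝ) * t (i+1)^q) := by
    intro i
    have h1 : ∀ j ∈ Ico (c i) (c (i+1)), x j ^ q ≤ t i ^ q := by
      intro j hj
      rw [Finset.mem_Ico] at hj
      have hjn : j < n := (hmem_lt (i+1) j hj.2).1
      exact Real.rpow_le_rpow (hx0 j hjn) (hnotmem i j hj.1 hjn) hq0.le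
    calc ∑ j ∈ Ico (c i) (c (i+1)), x j ^ q ≤ ∑ _j ∈ Ico (c i) (c (i+1)), t i ^ q :=
          Finset.sum_le_sum h1
      _ = ((c (i+1) - c i:ℕ):ℝ) * t i ^ q := by
          rw [Finset.sum_const, Nat.card_Ico, nsmul_eq_mul]
      _ ≤ (c (i+1):ℝ) * t i ^ q := by
          apply mul_le_mul_of_nonneg_right (Nat.cast_le.mpr (Nat.sub_le _ _))
          exact Real.rpow_nonneg (ht_pos i).le q
      _ = (2:ℝ)^q * ((c (i+1):ℝ) * t (i+1)^q) := by
          have h2 : t i = 2 * t (i+1) := by rw [ht_succ]; ring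
          rw [h2, Real.mul_rpow (by norm_num) (ht_pos (i+1)).le]
          ring
  -- assembly
  have hsum_eq : ∑ j ∈ range n, x j ^ q = ∑ j ∈ range (c (I+1)), x j ^ q := by
    symm
    apply Finset.sum_subset (Finset.range_subset_range.mpr (hc_le _))
    intro j hj hj2
    rw [Finset.mem_range] at hj
    rw [Finset.mem_range, not_lt] at hj2
    have h1 : x j ≤ t (I+1) := hnotmem (I+1) j hj2 hj
    have h2 : x j = 0 := by
      by_contra h
      have h3 : 0 < x j := lt_of_le_of_ne (hx0 j hj) (Ne.symm h)
      exact absurd (hI j hj h3) (not_lt.mpr h1)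
    rw [h2, Real.zero_rpow hqne]
  set A := (range (I+1)).filter
      (fun i => Nat.floor ((c (i+1) : ℝ) * V / w (i+1)) ≤ n) with hA_def
  set B := (range (I+1)).filter
      (fun i => ¬ Nat.floor ((c (i+1) : ℝ) * V / w (i+1)) ≤ n) with hB_def
  have hsplit : ∑ i ∈ range (I+1), (c (i+1):ℝ)*t (i+1)^q =
      ∑ i ∈ A, (c (i+1):ℝ)*t (i+1)^q + ∑ i ∈ B, (c (i+1):ℝ)*t (i+1)^q :=
    (Finset.sum_filter_add_sum_filter_not _ _ _).symm
  have hA : ∑ i ∈ A, (c (i+1):ℝ)*t (i+1)^q ≤ 4*M^q := by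
    calc ∑ i ∈ A, (c (i+1):ℝ)*t (i+1)^q ≤ ∑ i ∈ A, 2*M^q*(w (i+1)/V) := by
          apply Finset.sum_le_sum
          intro i hi
          exact (hlevel i).1 (Finset.mem_filter.mp hi).2
      _ ≤ ∑ i ∈ range (I+1), 2*M^q*(w (i+1)/V) := by
          apply Finset.sum_le_sum_of_subset_of_nonneg (Finset.filter_subset _ _)
          intro i _ _
          have := hw_nonneg (i+1)
          positivity
      _ = 2*M^q/V * ∑ i ∈ range (I+1), w (i+1) := by
          rw [Finset.mul_sum]
          apply Finset.sum_congr rfl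
          intro i _
          ring
      _ ≤ 2*M^q/V * (2*V) := by
          apply mul_le_mul_of_nonneg_left hsum_w
          positivity
      _ = 4*M^q := by field_simp; ring
  have hB : ∑ i ∈ B, (c (i+1):ℝ)*t (i+1)^q ≤ 2*M^q := by
    rcases Finset.eq_empty_or_nonempty B with hBe | hBne
    · rw [hBe, Finset.sum_empty]
      positivity
    · set i₀ := B.min' hBne with hi₀_def
      have hi₀B : i₀ ∈ B := B.min'_mem hBne
      have hi₀inv : t (i₀+1) ≤ inv n := (hlevel i₀).2 (Finset.mem_filter.mp hi₀B).2
      have hinvn0 : 0 ≤ inv n := (hinv n hn).1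
      have hinvq0 : 0 ≤ (inv n)^q := Real.rpow_nonneg hinvn0 q
      have hBsub : B ⊆ Finset.Icc i₀ I := by
        intro i hi
        rw [Finset.mem_Icc]
        refine ⟨Finset.min'_le _ _ hi, ?_⟩
        have h1 := (Finset.mem_filter.mp hi).1
        rw [Finset.mem_range] at h1
        omega
      have hterm : ∀ i ∈ B, (c (i+1):ℝ)*t (i+1)^q ≤
          (n:ℝ) * ((inv n)^q * (2:ℝ)⁻¹^(i - i₀)) := by
        intro i hi
        have hii : i₀ ≤ i := Finset.min'_le _ _ hi
        have h1 : t (i+1) = t (i₀+1) * (2:ℝ)⁻¹^(i - i₀) := by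
          simp only [ht_def]
          rw [mul_assoc, ← pow_add]
          congr 2
          omega
        have h3 : ((2:ℝ)⁻¹^(i-i₀))^q ≤ (2:ℝ)⁻¹^(i-i₀) := by
          rw [← Real.rpow_natCast ((2:ℝ)⁻¹) (i-i₀), ← Real.rpow_mul (by norm_num)]
          apply Real.rpow_le_rpow_of_exponent_ge (by norm_num) (by norm_num)
          have : (0:ℝ) ≤ ((i-i₀:ℕ):ℝ) := Nat.cast_nonneg _
          nlinarith
        have h4 : t (i₀+1)^q ≤ (inv n)^q :=
          Real.rpow_le_rpow (ht_pos _).le hi₀inv hq0.le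
        have h2 : t (i+1)^q ≤ (inv n)^q * (2:ℝ)⁻¹^(i-i₀) := by
          rw [h1, Real.mul_rpow (ht_pos _).le (by positivity)]
          apply mul_le_mul h4 h3 (by positivity) hinvq0
        calc (c (i+1):ℝ)*t (i+1)^q ≤ (n:ℝ)*t (i+1)^q := by
              apply mul_le_mul_of_nonneg_right (Nat.cast_le.mpr (hc_le _))
              exact Real.rpow_nonneg (ht_pos _).le q
          _ ≤ (n:ℝ)*((inv n)^q * (2:ℝ)⁻¹^(i-i₀)) :=
              mul_le_mul_of_nonneg_left h2 (Nat.cast_nonneg n)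
      calc ∑ i ∈ B, (c (i+1):ℝ)*t (i+1)^q
          ≤ ∑ i ∈ B, (n:ℝ)*((inv n)^q * (2:ℝ)⁻¹^(i-i₀)) := Finset.sum_le_sum hterm
        _ ≤ ∑ i ∈ Finset.Icc i₀ I, (n:ℝ)*((inv n)^q * (2:ℝ)⁻¹^(i-i₀)) := by
            apply Finset.sum_le_sum_of_subset_of_nonneg hBsub
            intro i _ _
            have h5 : (0:ℝ) ≤ (2:ℝ)⁻¹^(i-i₀) := by positivity
            exact mul_nonneg (Nat.cast_nonneg n) (mul_nonneg hinvq0 h5)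
        _ = (n:ℝ)*(inv n)^q * ∑ i ∈ Finset.Icc i₀ I, (2:ℝ)⁻¹^(i-i₀) := by
            rw [Finset.mul_sum]
            apply Finset.sum_congr rfl
            intro i _
            ring
        _ ≤ (n:ℝ)*(inv n)^q * 2 := by
            apply mul_le_mul_of_nonneg_left _ (by positivity)
            rw [← Finset.Ico_add_one_right_eq_Icc, Finset.sum_Ico_eq_sum_range]
            calc ∑ d ∈ range (I+1-i₀), (2:ℝ)⁻¹^(i₀+d-i₀)
                = ∑ d ∈ range (I+1-i₀), (2:ℝ)⁻¹^d := by
                  apply Finset.sum_congr rfl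
                  intro d _
                  congr 1
                  omega
              _ ≤ 2 := helper_geom _
        _ ≤ 2*M^q := by
            have := hMq n hn le_rfl
            linarith
  have htotal : ∑ j ∈ range n, x j ^ q ≤ (2:ℝ)^q * (6 * M^q) := by
    calc ∑ j ∈ range n, x j ^ q = ∑ j ∈ range (c (I+1)), x j ^ q := hsum_eq
      _ = ∑ i ∈ range (I+1), ∑ j ∈ Ico (c i) (c (i+1)), x j ^ q := (hblock _ _).symm
      _ ≤ ∑ i ∈ range (I+1), (2:ℝ)^q * ((c (i+1):ℝ) * t (i+1)^q) :=
          Finset.sum_le_sum fun i _ => hper i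
      _ = (2:ℝ)^q * ∑ i ∈ range (I+1), (c (i+1):ℝ) * t (i+1)^q := by
          rw [Finset.mul_sum]
      _ ≤ (2:ℝ)^q * (6 * M^q) := by
          have h2q : (0:ℝ) ≤ (2:ℝ)^q := Real.rpow_nonneg (by norm_num) q
          rw [hsplit] at *
          have := hA
          have := hB
          nlinarith [hA, hB]
  -- conclude
  have hLnn : 0 ≤ ∑ j ∈ range n, x j ^ q :=
    Finset.sum_nonneg fun j hj => Real.rpow_nonneg (hx0 j (Finset.mem_range.mp hj)) q
  have h16 : (2:ℝ)^q * (6 * M^q) ≤ (16*M)^q := by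
    have h1 : (16:ℝ)*M = 16*M := rfl
    rw [Real.mul_rpow (by norm_num : (0:ℝ) ≤ 16) hMpos.le]
    have h2 : (16:ℝ)^q = (2:ℝ)^q * (2:ℝ)^(3*q) := by
      rw [← Real.rpow_add (by norm_num : (0:ℝ) < 2)]
      have h3 : q + 3*q = 4*q := by ring
      rw [h3]
      have h4 : (16:ℝ) = (2:ℝ)^(4:ℝ) := by
        rw [show (4:ℝ) = ((4:ℕ):ℝ) by norm_num, Real.rpow_natCast]
        norm_num
      rw [h4, ← Real.rpow_mul (by norm_num : (0:ℝ) ≤ 2)]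
    rw [h2]
    have h5 : (8:ℝ) ≤ (2:ℝ)^(3*q) := by
      have h6 : (2:ℝ)^(3:ℝ) ≤ (2:ℝ)^(3*q) := by
        apply Real.rpow_le_rpow_of_exponent_le (by norm_num)
        nlinarith
      have h7 : (2:ℝ)^(3:ℝ) = 8 := by
        rw [show (3:ℝ) = ((3:ℕ):ℝ) by norm_num, Real.rpow_natCast]
        norm_num
      linarith
    have h2q : (0:ℝ) ≤ (2:ℝ)^q := Real.rpow_nonneg (by norm_num) q
    nlinarith
  calc (∑ j ∈ range n, x j ^ q) ^ (1/q) ≤ ((16*M)^q)^(1/q) :=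
        Real.rpow_le_rpow hLnn (le_trans htotal h16) (by positivity)
    _ = 16*M := by
        rw [← Real.rpow_mul (by linarith : (0:ℝ) ≤ 16*M), mul_one_div_cancel hqne,
          Real.rpow_one]
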